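/- Let G = (V, E) be a directed graph in which every vertex has at least one out-neighbor, let A be a DFS spanning tree of G rooted at v₀ spanning all of V (vertices numbered in discovery order), and let B contain, for each vertex v_i, the edge from v_i to its out-neighbor of smallest discovery index. Then G is strongly connected if and only if the subgraph G' = (V, A ∪ B) is strongly connected. -/

import Mathlib

/-- Let `E` be the edge relation of a directed graph on vertices
`0, 1, …, n-1`, numbered in the order a depth-first search from vertex `0`
discovers them, in which every vertex has at least one out-neighbor.  Let
`A ⊆ E` be the DFS tree edges, spanning all of `V` ( `hspan` ), with `fin v`
the largest discovery index in the DFS subtree rooted at `v`, so that the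
subtree of `v` is the interval `[v, fin v]` (`hsub`), and with the DFS
property `hwhite` that every out-neighbor of `u` discovered after `u` lies in
the subtree of `u`.  Let `b v` be the out-neighbor of `v` of smallest
discovery index (`hb`), giving the set `B` of backward edges.  Then `G` is
strongly connected iff the subgraph with edge set `A ∪ B` is strongly
connected. -/
theorem strong_connectivity_iff_tree_union_backedges {n : ℕ} (hn : 0 < n)
    (E A : Fin n → Fin n → Prop) (fin : Fin n → ℕ) (b : Fin n → Fin n)
    (hAE : ∀ u v, A u v → E u v)
    (hout : ∀ v, ∃ w, E v w)
    (hspan : ∀ v, Relation.ReflTransGen A ⟨0, hn⟩ v)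
    (hsub : ∀ v w : Fin n,
      Relation.ReflTransGen A v w ↔ (v ≤ w ∧ w.val ≤ fin v))
    (hwhite : ∀ u w : Fin n, E u w → u < w → w.val ≤ fin u)
    (hb : ∀ v, E v (b v) ∧ ∀ w, E v w → b v ≤ w) :
    (∀ u v, Relation.ReflTransGen E u v) ↔
      (∀ u v, Relation.ReflTransGen (fun s t => A s t ∨ t = b s) u v) := by
  constructor
  · intro h
    set R' : Fin n → Fin n → Prop := fun s t => A s t ∨ t = b s with hR'
    -- lift A-paths to R'-paths
    have liftA : ∀ {x y : Fin n}, Relation.ReflTransGen A x y →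
        Relation.ReflTransGen R' x y := fun hp =>
      Relation.ReflTransGen.mono (fun s t hst => Or.inl hst) _ _ hp
    -- every vertex reaches 0 in R'
    have key : ∀ (m : ℕ) (v : Fin n), v.val ≤ m → Relation.ReflTransGen R' v ⟨0, hn⟩ := by
      intro m
      induction m with
      | zero =>
        intro v hv
        have : v = ⟨0, hn⟩ := Fin.ext (Nat.le_zero.1 hv)
        rw [this]
      | succ m ih =>
        intro v hvm
        rcases eq_or_ne v ⟨0, hn⟩ with rfl | hv0
        · exact Relation.ReflTransGen.refl
        have hvpos : (⟨0, hn⟩ : Fin n) < v := by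
          have : v.val ≠ 0 := fun hc => hv0 (Fin.ext hc)
          exact Fin.lt_def.mpr (Nat.pos_of_ne_zero this)
        -- find an edge leaving the subtree of v to a smaller vertex
        have exit : ∃ x y : Fin n, (v ≤ x ∧ x.val ≤ fin v) ∧ E x y ∧ y < v := by
          have hpath := h v ⟨0, hn⟩
          have aux : ∀ s : Fin n, Relation.ReflTransGen E s ⟨0, hn⟩ →
              (v ≤ s ∧ s.val ≤ fin v) →
              ∃ x y : Fin n, (v ≤ x ∧ x.val ≤ fin v) ∧ E x y ∧ y < v := by
            intro s hp
            induction hp using Relation.ReflTransGen.head_induction_on with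
            | refl =>
              intro hs
              exact absurd (Fin.ext (by have := Fin.le_def.mp hs.1; omega)) hv0
            | head hsc hct ihp =>
              rename_i s c
              intro hs
              by_cases hcv : c < v
              · exact ⟨s, c, hs, hsc, hcv⟩
              · push_neg at hcv
                by_cases hcf : c.val ≤ fin v
                · exact ihp ⟨hcv, hcf⟩
                · push_neg at hcf
                  have hsc' : s < c := by
                    have : s.val < c.val := lt_of_le_of_lt hs.2 hcf
                    exact this
                  have h1 : Relation.ReflTransGen A v s := (hsub v s).2 hs
                  have h2 : Relation.ReflTransGen A s c :=
                    (hsub s c).2 ⟨le_of_lt hsc', hwhite s c hsc hsc'⟩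
                  have h3 := ((hsub v c).1 (h1.trans h2)).2
                  omega
          exact aux v hpath ⟨le_refl v, ((hsub v v).1 Relation.ReflTransGen.refl).2⟩
        obtain ⟨x, y, hx, hxy, hyv⟩ := exit
        have hbxy : b x ≤ y := (hb x).2 y hxy
        have hbx : b x < v := lt_of_le_of_lt hbxy hyv
        have p1 : Relation.ReflTransGen R' v x := liftA ((hsub v x).2 hx)
        have p2 : Relation.ReflTransGen R' v (b x) :=
          p1.tail (Or.inr rfl)
        have : (b x).val ≤ m := by omega
        exact p2.trans (ih (b x) this)
    intro u v
    exact (key u.val u le_rfl).trans (liftA (hspan v))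
  · intro h u v
    exact Relation.ReflTransGen.mono
      (fun s t hst => hst.elim (hAE s t) (fun ht => ht ▸ (hb s).1)) _ _ (h u v)
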